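/- Let R be a ring and C• a finitely generated free acyclic chain complex over R. Then the identity map of C• is chain homotopic to zero. -/

import Mathlib

open CategoryTheory

section Aux

variable {R : Type} [Ring R] (C : ChainComplex (ModuleCat R) ℤ)

private lemma eqToHom_d {i j k : ℤ} (e : i = j) :
    eqToHom (congrArg C.X e) ≫ C.d j k = C.d i k := by subst e; simp

open Classical in
/-- One step of the nullhomotopy construction. -/
noncomputable def stmt11nxt (i : ℤ) (h' : C.X (i-1) ⟶ C.X i) : C.X i ⟶ C.X (i+1) :=
  if hg : ∃ k : C.X i ⟶ C.X (i+1),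
      k ≫ C.d (i+1) i = 𝟙 (C.X i) - C.d i (i-1) ≫ h' then hg.choose else 0

open Classical in
/-- The nullhomotopy, defined by recursion on `i` starting at `lo`. -/
noncomputable def stmt11h (lo : ℤ) (i : ℤ) : C.X i ⟶ C.X (i+1) :=
  if i ≤ lo then 0
  else stmt11nxt C i (stmt11h lo (i-1) ≫ eqToHom (congrArg C.X (by omega : i-1+1 = i)))
  termination_by (i - lo).toNat
  decreasing_by omega

private lemma stmt11lift (hfree : ∀ i : ℤ, Module.Free R (C.X i))
    (hacyclic : ∀ i : ℤ, C.ExactAt i) (i : ℤ) (g : C.X i ⟶ C.X i)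
    (hg : g ≫ C.d i (i-1) = 0) :
    ∃ k : C.X i ⟶ C.X (i+1), k ≫ C.d (i+1) i = g := by
  have hex := (C.exactAt_iff' (i+1) i (i-1) (by simp) (by simp)).mp (hacyclic i)
  rw [ShortComplex.moduleCat_exact_iff] at hex
  -- view morphisms as linear maps
  have hdd : ∀ x : C.X (i+1), (C.d i (i-1)) ((C.d (i+1) i) x) = 0 := by
    intro x
    have := C.d_comp_d (i+1) i (i-1)
    calc (C.d i (i-1)) ((C.d (i+1) i) x) = (C.d (i+1) i ≫ C.d i (i-1)) x := rfl
    _ = 0 := by rw [this]; rfl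
  set K := LinearMap.ker (C.d i (i-1)).hom with hK
  let f' : C.X (i+1) →ₗ[R] K := LinearMap.codRestrict K (C.d (i+1) i).hom hdd
  have hgk : ∀ x : C.X i, (C.d i (i-1)) (g x) = 0 := by
    intro x
    calc (C.d i (i-1)) (g x) = (g ≫ C.d i (i-1)) x := rfl
    _ = 0 := by rw [hg]; rfl
  let g' : C.X i →ₗ[R] K := LinearMap.codRestrict K g.hom hgk
  have hsurj : Function.Surjective f' := by
    rintro ⟨x, hx⟩
    obtain ⟨y, hy⟩ := hex x hx
    exact ⟨y, Subtype.ext hy⟩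
  have : Module.Free R (C.X i) := hfree i
  have : Module.Projective R (C.X i) := Module.Projective.of_free
  obtain ⟨k, hk⟩ := Module.projective_lifting_property f' g' hsurj
  refine ⟨ModuleCat.ofHom k, ?_⟩
  ext x
  have h2 : f' (k x) = g' x := by rw [← LinearMap.comp_apply, hk]
  exact congrArg Subtype.val h2

private lemma stmt11R (hfree : ∀ i : ℤ, Module.Free R (C.X i))
    (hacyclic : ∀ i : ℤ, C.ExactAt i) (lo : ℤ)
    (hz : ∀ i : ℤ, i ≤ lo → Limits.IsZero (C.X i)) (i : ℤ) :
    stmt11h C lo i ≫ C.d (i+1) i =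
      𝟙 (C.X i) - C.d i (i-1) ≫ stmt11h C lo (i-1) ≫
        eqToHom (congrArg C.X (by omega : i-1+1 = i)) := by
  -- strong induction on (i - lo).toNat
  suffices H : ∀ n : ℕ, ∀ i : ℤ, i ≤ lo + n → stmt11h C lo i ≫ C.d (i+1) i =
      𝟙 (C.X i) - C.d i (i-1) ≫ stmt11h C lo (i-1) ≫
        eqToHom (congrArg C.X (by omega : i-1+1 = i)) by
    exact H (max 0 (i - lo)).toNat i (by omega)
  intro n
  induction n with
  | zero =>
      intro i hi
      rw [stmt11h, if_pos (by omega), stmt11h, if_pos (by omega)]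
      have h1 : 𝟙 (C.X i) = 0 := (hz i (by omega)).eq_of_src _ _
      simp [h1]
  | succ n ih =>
      intro i hi
      by_cases hlo : i ≤ lo + n
      · exact ih i hlo
      · have hRprev := ih (i-1) (by omega)
        rw [stmt11h, if_neg (by omega)]
        rw [stmt11nxt]
        have hg0 : (𝟙 (C.X i) - C.d i (i-1) ≫ stmt11h C lo (i-1) ≫
            eqToHom (congrArg C.X (by omega : i-1+1 = i))) ≫ C.d i (i-1) = 0 := by
          rw [Preadditive.sub_comp, Category.id_comp, Category.assoc, Category.assoc,
            eqToHom_d C (by omega : i-1+1 = i), hRprev]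
          simp
        have hex : ∃ k : C.X i ⟶ C.X (i+1), k ≫ C.d (i+1) i =
            𝟙 (C.X i) - C.d i (i-1) ≫ stmt11h C lo (i-1) ≫
              eqToHom (congrArg C.X (by omega : i-1+1 = i)) :=
          stmt11lift C hfree hacyclic i _ hg0
        rw [dif_pos hex]
        exact hex.choose_spec

end Aux

/-- A bounded, finitely generated, free, acyclic chain complex over a ring `R`
has identity chain homotopic to zero. -/
theorem stmt11 {R : Type} [Ring R] (C : ChainComplex (ModuleCat R) ℤ)
    (hfree : ∀ i : ℤ, Module.Free R (C.X i))
    (hfin : ∀ i : ℤ, Module.Finite R (C.X i))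
    (hbdd : ∃ N : ℕ, ∀ i : ℤ, (N : ℤ) < |i| → Limits.IsZero (C.X i))
    (hacyclic : ∀ i : ℤ, C.ExactAt i) :
    Nonempty (Homotopy (𝟙 C) 0) := by
  obtain ⟨N, hN⟩ := hbdd
  set lo : ℤ := -(N+1) with hlo
  have hz : ∀ i : ℤ, i ≤ lo → Limits.IsZero (C.X i) := by
    intro i hi
    exact hN i (by rw [abs_of_nonpos (by omega)]; omega)
  have hR := stmt11R C hfree hacyclic lo hz
  refine ⟨⟨fun i j => if hij : i + 1 = j then stmt11h C lo i ≫ eqToHom (congrArg C.X hij)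
    else 0, ?_, ?_⟩⟩
  · intro i j hij
    have : i + 1 ≠ j := by
      simp only [ComplexShape.down_Rel] at hij
      omega
    rw [dif_neg this]
  · intro i
    have hnext : (ComplexShape.down ℤ).next i = i - 1 := by
      apply ComplexShape.next_eq'
      simp only [ComplexShape.down_Rel]; omega
    have hprev : (ComplexShape.down ℤ).prev i = i + 1 := by
      apply ComplexShape.prev_eq'
      simp
    rw [dNext_eq _ (show (ComplexShape.down ℤ).Rel i (i-1) by simp only [ComplexShape.down_Rel]; omega),
      prevD_eq _ (show (ComplexShape.down ℤ).Rel (i+1) i by simp)]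
    rw [dif_pos (show i - 1 + 1 = i by omega), dif_pos rfl]
    simp only [eqToHom_refl, Category.comp_id, HomologicalComplex.id_f,
      HomologicalComplex.zero_f, add_zero, Category.assoc]
    rw [hR i]
    abel
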